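/- Let X be a non-deterministic infinite exchangeable sequence of {0,1}-valued random variables, let n ≥ 2, u ∈ {2,…,n}, and let φ : {0,1}^n → ℝ be symmetric. Then for every x ∈ {0,1}^{n−1} containing exactly z zeros in total and exactly k zeros among its first n−u coordinates, E[φ(X_1,…,X_n) | (X_{u+1},…,X_{u+n−1}) = x] = Σ_{m=0}^{u} C(u,m) · φ(0^(k+m)) · P_{n−1+u}(0^(z+m)) / P_{n−1}(0^(z)). -/

import Mathlib

open MeasureTheory

namespace HoeffdingUrn

variable {Ω : Type} [MeasurableSpace Ω]

/-- `X` is an exchangeable sequence under `μ`: each `X i` is measurable and, for every `n`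
and every permutation `π` of `{0,…,n-1}`, the law of `(X_{π 0},…,X_{π (n-1)})` coincides with
the law of `(X_0,…,X_{n-1})`. -/
def Exchangeable {D : Type} [MeasurableSpace D] (X : ℕ → Ω → D) (μ : Measure Ω) : Prop :=
  (∀ i, Measurable (X i)) ∧
  ∀ (n : ℕ) (π : Equiv.Perm (Fin n)),
    Measure.map (fun ω (i : Fin n) => X ((π i : Fin n) : ℕ) ω) μ =
      Measure.map (fun ω (i : Fin n) => X (i : ℕ) ω) μ

/-- probability that the first `n` variables equal the vector `x`. -/
noncomputable def cylProb {D : Type} (X : ℕ → Ω → D) (μ : Measure Ω) {n : ℕ}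
    (x : Fin n → D) : ℝ :=
  (μ {ω | ∀ i : Fin n, X (i : ℕ) ω = x i}).toReal

/-- `X` is non-deterministic: every finite configuration has positive probability. -/
def NonDeterministic {D : Type} (X : ℕ → Ω → D) (μ : Measure Ω) : Prop :=
  ∀ n : ℕ, 1 ≤ n → ∀ x : Fin n → D, 0 < cylProb X μ x

/-- the canonical vector of `{0,1}ⁿ` (with `false` = 0) containing exactly `j` zeros. -/
def zeroVec (n j : ℕ) : Fin n → Bool := fun i => decide (j ≤ (i : ℕ))

/-- number of zeros (`false` entries) in a Boolean vector. -/
def zeroCountVec {n : ℕ} (x : Fin n → Bool) : ℕ :=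
  (Finset.univ.filter fun i => x i = false).card

/-- `P_n(0^{(j)})`: the common probability of any configuration of `(X_1,…,X_n)` with
exactly `j` zeros. -/
noncomputable def Pz (X : ℕ → Ω → Bool) (μ : Measure Ω) (n j : ℕ) : ℝ :=
  cylProb X μ (zeroVec n j)

/-- number of zeros among the first `n` variables. -/
def zeroCount (X : ℕ → Ω → Bool) (n : ℕ) (ω : Ω) : ℕ :=
  zeroCountVec (fun i : Fin n => X (i : ℕ) ω)

/-- `P^n_{n+v}(0^{(b)} ∣ 0^{(a)})`: conditional probability that `(X_1,…,X_{n+v})`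
contains exactly `b` zeros given that `(X_1,…,X_n)` contains exactly `a` zeros. -/
noncomputable def condP (X : ℕ → Ω → Bool) (μ : Measure Ω) (n v b a : ℕ) : ℝ :=
  (μ {ω | zeroCount X (n + v) ω = b ∧ zeroCount X n ω = a}).toReal /
    (μ {ω | zeroCount X n ω = a}).toReal

/-- a symmetric function of `k` variables. -/
def SymmFun {D : Type} {k : ℕ} (φ : (Fin k → D) → ℝ) : Prop :=
  ∀ (π : Equiv.Perm (Fin k)) (x : Fin k → D), φ (x ∘ π) = φ x

open Classical in
/-- the symmetric `U`-statistic with kernel `φ` of order `k`, based on `(X_1,…,X_n)`: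
`F = ∑_{1 ≤ j₁ < … < j_k ≤ n} φ(X_{j₁},…,X_{j_k})`. -/
noncomputable def Ustat {D : Type} (X : ℕ → Ω → D) (n : ℕ) {k : ℕ}
    (φ : (Fin k → D) → ℝ) : Ω → ℝ :=
  fun ω => ∑ j : Fin k → Fin n, if StrictMono j then φ (fun i => X ((j i : Fin n) : ℕ) ω) else 0

/-- complete degeneracy of the kernel `φ` of order `k`:
`E[φ(X_1,…,X_k) ∣ X_2,…,X_k] = 0` a.s. -/
def Degenerate {D : Type} [MeasurableSpace D] (X : ℕ → Ω → D) (μ : Measure Ω) {k : ℕ}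
    (φ : (Fin k → D) → ℝ) : Prop :=
  μ[(fun ω => φ (fun i => X (i : ℕ) ω)) |
      MeasurableSpace.comap (fun ω (i : Fin (k - 1)) => X ((i : ℕ) + 1) ω) inferInstance]
    =ᵐ[μ] 0

/-- `X` is Hoeffding decomposable: for every `n ≥ 2` and `1 ≤ k ≤ n`, a symmetric
`U`-statistic of order `k` based on `(X_1,…,X_n)` is orthogonal to `SU_{k-1}(X_{[n]})`
(equivalently, lies in `SH_k(X_{[n]})`) if and only if its kernel is completely degenerate. -/
def HoeffdingDecomposable {D : Type} [MeasurableSpace D] (X : ℕ → Ω → D) (μ : Measure Ω) :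
    Prop :=
  ∀ n : ℕ, 2 ≤ n → ∀ k : ℕ, 1 ≤ k → k ≤ n → ∀ φ : (Fin k → D) → ℝ, SymmFun φ →
    ((∀ ψ : (Fin (k - 1) → D) → ℝ, SymmFun ψ →
        ∫ ω, Ustat X n φ ω * Ustat X n ψ ω ∂μ = 0) ↔ Degenerate X μ φ)

/-- the symmetric Hoeffding spaces `SH_k(X_{[n]})`, `n ≥ 2`, `1 ≤ k ≤ n`, are all
non-trivial: each contains a `U`-statistic which is not a.s. zero. -/
def SHNontrivial {D : Type} (X : ℕ → Ω → D) (μ : Measure Ω) : Prop :=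
  ∀ n : ℕ, 2 ≤ n → ∀ k : ℕ, 1 ≤ k → k ≤ n →
    ∃ φ : (Fin k → D) → ℝ, SymmFun φ ∧
      (∀ ψ : (Fin (k - 1) → D) → ℝ, SymmFun ψ →
        ∫ ω, Ustat X n φ ω * Ustat X n ψ ω ∂μ = 0) ∧
      ∫ ω, (Ustat X n φ ω) ^ 2 ∂μ ≠ 0

/-- canonical symmetrization of a function of `m` variables. -/
noncomputable def symmetrize {D : Type} {m : ℕ} (f : (Fin m → D) → ℝ) : (Fin m → D) → ℝ :=
  fun x => (∑ π : Equiv.Perm (Fin m), f (x ∘ π)) / (Nat.factorial m : ℝ)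

/-- the vector `(y_1,…,y_u,x_1,…,x_{n-u})` of length `n` (for `1 ≤ u ≤ n`). -/
noncomputable def headTail {D : Type} [Nonempty D] (u n : ℕ) (y : Fin u → D)
    (x : Fin (n - 1) → D) : Fin n → D :=
  fun i =>
    if h : (i : ℕ) < u then y ⟨i, h⟩
    else if h2 : (i : ℕ) - u < n - 1 then x ⟨(i : ℕ) - u, h2⟩
    else Classical.arbitrary D

/-- `[T]^{(n-u)}_{n,n-1}`: the (version of the) conditional expectation
`E[T(X_1,…,X_n) ∣ X_{u+1},…,X_{u+n-1}]`, viewed as a function on `D^{n-1}`. -/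
noncomputable def condProj {D : Type} [Fintype D] [Nonempty D] (X : ℕ → Ω → D)
    (μ : Measure Ω) (n u : ℕ) (T : (Fin n → D) → ℝ) : (Fin (n - 1) → D) → ℝ :=
  fun x =>
    (∑ y : Fin u → D, T (headTail u n y x) * cylProb X μ (Fin.append y x)) / cylProb X μ x

/-- `X` is weakly independent: for every `n ≥ 2`, every symmetric `T : D^n → ℝ` with
`[T]^{(n-1)}_{n,n-1}(X_2,…,X_n) = 0` a.s. satisfies, for every `u = 2,…,n`,
`tilde-[T]^{(n-u)}_{n,n-1}(X_{u+1},…,X_{u+n-1}) = 0` a.s. -/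
def WeaklyIndependent {D : Type} [Fintype D] [Nonempty D] (X : ℕ → Ω → D)
    (μ : Measure Ω) : Prop :=
  ∀ n : ℕ, 2 ≤ n → ∀ T : (Fin n → D) → ℝ, SymmFun T →
    (∀ᵐ ω ∂μ, condProj X μ n 1 T (fun i : Fin (n - 1) => X ((i : ℕ) + 1) ω) = 0) →
    ∀ u : ℕ, 2 ≤ u → u ≤ n →
      ∀ᵐ ω ∂μ, symmetrize (condProj X μ n u T) (fun i : Fin (n - 1) => X (u + (i : ℕ)) ω) = 0

/-- `γ` is the de Finetti measure of the `{0,1}`-valued exchangeable sequence `X`. -/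
def IsDeFinettiMeasure (X : ℕ → Ω → Bool) (μ : Measure Ω) (γ : Measure ℝ) : Prop :=
  IsProbabilityMeasure γ ∧ γ (Set.Icc (0 : ℝ) 1)ᶜ = 0 ∧
  ∀ (n : ℕ) (x : Fin n → Bool),
    cylProb X μ x =
      ∫ θ, θ ^ (Finset.univ.filter fun i => x i = true).card *
        (1 - θ) ^ (Finset.univ.filter fun i => x i = false).card ∂γ

/-- the `n`-th moment of a measure on `[0,1] ⊆ ℝ`. -/
noncomputable def momentOf (γ : Measure ℝ) (n : ℕ) : ℝ := ∫ θ, θ ^ n ∂γ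

/-- the Beta(a,b) distribution on `[0,1]`, with density `θ^{a-1}(1-θ)^{b-1}/B(a,b)`. -/
noncomputable def betaMeasure (a b : ℝ) : Measure ℝ :=
  (volume.restrict (Set.Ioo (0 : ℝ) 1)).withDensity fun θ =>
    ENNReal.ofReal (θ ^ (a - 1) * (1 - θ) ^ (b - 1) /
      ∫ t in Set.Ioo (0 : ℝ) 1, t ^ (a - 1) * (1 - t) ^ (b - 1))

/-- the canonical completely degenerate kernel `φ_n^{(0)}` of order `n`:
`φ_n^{(0)}(0^{(k)}) = (-1)^k P_n(0^{(0)}) / P_n(0^{(k)})`. -/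
noncomputable def phi0 (X : ℕ → Ω → Bool) (μ : Measure Ω) (n : ℕ) :
    (Fin n → Bool) → ℝ :=
  fun x => (-1 : ℝ) ^ zeroCountVec x * (Pz X μ n 0 / Pz X μ n (zeroCountVec x))

/-- `f` is separately symmetric in its first `v` and last `m - v` variables. -/
def SepSymm {m : ℕ} (v : ℕ) (f : (Fin m → Bool) → ℝ) : Prop :=
  ∀ π : Equiv.Perm (Fin m), (∀ i : Fin m, (i : ℕ) < v ↔ ((π i : Fin m) : ℕ) < v) →
    ∀ x : Fin m → Bool, f (x ∘ π) = f x

/-- the canonical vector of `{0,1}^m` whose first `v` coordinates contain exactly `k`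
zeros and whose last `m - v` coordinates contain exactly `l` zeros. -/
def blockVec (m v k l : ℕ) : Fin m → Bool :=
  fun i => if (i : ℕ) < v then decide (k ≤ (i : ℕ)) else decide (l ≤ (i : ℕ) - v)

/-- `X` is an urn process in the sense of Hill, Lane and Sudderth: there are a measurable
`f : [0,1] → [0,1]` and positive integers `r`, `b` with
`P(X_{n+1} = 1 ∣ X_1,…,X_n) = f((r + X_1 + … + X_n)/(r + b + n))` a.s. for every `n ≥ 1`. -/
def IsUrnProcess (X : ℕ → Ω → Bool) (μ : Measure Ω) : Prop :=
  ∃ (f : ℝ → ℝ) (r b : ℕ), Measurable f ∧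
    Set.MapsTo f (Set.Icc (0 : ℝ) 1) (Set.Icc (0 : ℝ) 1) ∧ 0 < r ∧ 0 < b ∧
    ∀ n : ℕ, 1 ≤ n →
      (μ[(fun ω => if X n ω = true then (1 : ℝ) else 0) |
          MeasurableSpace.comap (fun ω (i : Fin n) => X (i : ℕ) ω) inferInstance]
        =ᵐ[μ] fun ω =>
          f (((r : ℝ) + ∑ i : Fin n, (if X (i : ℕ) ω = true then (1 : ℝ) else 0)) /
            ((r : ℝ) + (b : ℝ) + (n : ℝ))))

section AuxLemmas

lemma zeroCountVec_le {M : ℕ} (w : Fin M → Bool) : zeroCountVec w ≤ M := by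
  calc zeroCountVec w ≤ (Finset.univ : Finset (Fin M)).card := Finset.card_filter_le _ _
  _ = M := by simp

lemma zeroCountVec_zeroVec {M j : ℕ} (h : j ≤ M) : zeroCountVec (zeroVec M j) = j := by
  calc zeroCountVec (zeroVec M j)
      = ∑ i : Fin M, if (i : ℕ) < j then 1 else 0 := by
        rw [zeroCountVec, Finset.card_filter]
        refine Finset.sum_congr rfl fun i _ => ?_
        by_cases hi : (i : ℕ) < j
        · simp [zeroVec, show ¬ j ≤ (i:ℕ) from by omega, hi]
        · simp [zeroVec, show j ≤ (i:ℕ) from by omega, hi]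
    _ = ∑ t ∈ Finset.range M, if t < j then 1 else 0 :=
        Fin.sum_univ_eq_sum_range (fun t => if t < j then 1 else 0) M
    _ = j := by
        rw [← Finset.card_filter,
          show (Finset.range M).filter (fun t => t < j) = Finset.range j from by
            ext a; simp; omega]
        exact Finset.card_range j

lemma exists_perm_count_eq {M : ℕ} {w w' : Fin M → Bool}
    (h : zeroCountVec w = zeroCountVec w') :
    ∃ σ : Equiv.Perm (Fin M), ∀ i, w (σ i) = w' i := by
  have hc : Fintype.card {i : Fin M // w' i = false} = Fintype.card {i : Fin M // w i = false} := by
    rw [Fintype.card_subtype, Fintype.card_subtype]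
    exact h.symm
  have hc2 : Fintype.card {i : Fin M // ¬ w' i = false} =
      Fintype.card {i : Fin M // ¬ w i = false} := by
    rw [Fintype.card_subtype_compl, Fintype.card_subtype_compl, hc]
  let e1 := Fintype.equivOfCardEq hc
  let e2 := Fintype.equivOfCardEq hc2
  refine ⟨(Equiv.sumCompl (fun i => w' i = false)).symm.trans
    ((e1.sumCongr e2).trans (Equiv.sumCompl (fun i => w i = false))), ?_⟩
  intro i
  by_cases hi : w' i = false
  · rw [Equiv.trans_apply, Equiv.trans_apply,
      Equiv.sumCompl_symm_apply_of_pos (p := fun j => w' j = false) hi]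
    simp only [Equiv.sumCongr_apply, Sum.map_inl, Equiv.sumCompl_apply_inl]
    rw [(e1 ⟨i, hi⟩).2, hi]
  · rw [Equiv.trans_apply, Equiv.trans_apply,
      Equiv.sumCompl_symm_apply_of_neg (p := fun j => w' j = false) hi]
    simp only [Equiv.sumCongr_apply, Sum.map_inr, Equiv.sumCompl_apply_inr]
    have h1 := (e2 ⟨i, hi⟩).2
    simp only [Bool.not_eq_false] at h1 hi ⊢
    rw [h1, hi]

lemma measurableSet_cyl {X : ℕ → Ω → Bool} (hX : ∀ i, Measurable (X i)) {M : ℕ}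
    (c : Fin M → Bool) : MeasurableSet {ω | ∀ i : Fin M, X (i : ℕ) ω = c i} := by
  have : {ω | ∀ i : Fin M, X (i : ℕ) ω = c i} = ⋂ i : Fin M, (X (i : ℕ)) ⁻¹' {c i} := by
    ext ω; simp [Set.mem_iInter]
  rw [this]
  exact MeasurableSet.iInter fun i => (hX _) (measurableSet_singleton _)

lemma cylProb_perm (X : ℕ → Ω → Bool) (μ : Measure Ω) (hexch : Exchangeable X μ)
    {M : ℕ} (σ : Equiv.Perm (Fin M)) (w : Fin M → Bool) :
    cylProb X μ (fun i => w (σ i)) = cylProb X μ w := by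
  unfold cylProb
  congr 1
  have h2 := hexch.2 M σ⁻¹
  have h3 := congrArg (fun ν : Measure (Fin M → Bool) => ν {w}) h2
  have hmap1 : Measurable (fun ω (i : Fin M) => X (((σ⁻¹ : Equiv.Perm (Fin M)) i : Fin M) : ℕ) ω) :=
    measurable_pi_lambda _ fun i => hexch.1 _
  have hmap2 : Measurable (fun ω (i : Fin M) => X ((i : Fin M) : ℕ) ω) :=
    measurable_pi_lambda _ fun i => hexch.1 _
  rw [Measure.map_apply hmap1 (measurableSet_singleton w),
    Measure.map_apply hmap2 (measurableSet_singleton w)] at h3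
  have e1 : (fun ω (i : Fin M) => X (((σ⁻¹ : Equiv.Perm (Fin M)) i : Fin M) : ℕ) ω) ⁻¹' {w}
      = {ω | ∀ i : Fin M, X (i : ℕ) ω = w (σ i)} := by
    ext ω
    simp only [Set.mem_preimage, Set.mem_singleton_iff, funext_iff, Set.mem_setOf_eq]
    constructor
    · intro hv j
      have := hv (σ j)
      simpa using this
    · intro hv i
      have := hv (σ⁻¹ i)
      simpa using this
  have e2 : (fun ω (i : Fin M) => X ((i : Fin M) : ℕ) ω) ⁻¹' {w}
      = {ω | ∀ i : Fin M, X (i : ℕ) ω = w i} := by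
    ext ω
    simp only [Set.mem_preimage, Set.mem_singleton_iff, funext_iff, Set.mem_setOf_eq]
  rw [e1, e2] at h3
  exact h3

lemma cylProb_eq_Pz (X : ℕ → Ω → Bool) (μ : Measure Ω) (hexch : Exchangeable X μ)
    {M : ℕ} (w : Fin M → Bool) :
    cylProb X μ w = Pz X μ M (zeroCountVec w) := by
  obtain ⟨σ, hσ⟩ := exists_perm_count_eq (w := zeroVec M (zeroCountVec w)) (w' := w)
    (by rw [zeroCountVec_zeroVec (zeroCountVec_le w)])
  have hfun : (fun i => zeroVec M (zeroCountVec w) (σ i)) = w := funext hσ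
  have hp := cylProb_perm X μ hexch σ (zeroVec M (zeroCountVec w))
  rw [hfun] at hp
  rw [hp]
  rfl

open Fin.NatCast in
lemma measure_shift (X : ℕ → Ω → Bool) (μ : Measure Ω) (hexch : Exchangeable X μ)
    (s : ℕ) {N : ℕ} (hN : 0 < N) (w : Fin N → Bool) :
    μ {ω | ∀ i : Fin N, X (s + (i : ℕ)) ω = w i} = μ {ω | ∀ i : Fin N, X (i : ℕ) ω = w i} := by
  haveI : NeZero (s + N) := ⟨by omega⟩
  have hNM : N ≤ s + N := by omega
  let π : Equiv.Perm (Fin (s + N)) := Equiv.addLeft ((s : ℕ) : Fin (s + N))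
  have hπval : ∀ i : Fin N, ((π (Fin.castLE hNM i) : Fin (s + N)) : ℕ) = s + (i : ℕ) := by
    intro i
    show ((((s : ℕ) : Fin (s + N)) + Fin.castLE hNM i : Fin (s + N)) : ℕ) = s + (i : ℕ)
    rw [Fin.val_add, Fin.val_natCast, Fin.coe_castLE,
      Nat.mod_eq_of_lt (show s < s + N by omega), Nat.mod_eq_of_lt (by omega)]
  set S : Set (Fin (s + N) → Bool) := {v | ∀ i : Fin N, v (Fin.castLE hNM i) = w i} with hSdef
  have hS : MeasurableSet S := by
    have : S = ⋂ i : Fin N, (fun v : Fin (s + N) → Bool => v (Fin.castLE hNM i)) ⁻¹' {w i} := by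
      ext v; simp [hSdef, Set.mem_iInter]
    rw [this]
    exact MeasurableSet.iInter fun i => (measurable_pi_apply _) (measurableSet_singleton _)
  have h2 := hexch.2 (s + N) π
  have hmap1 : Measurable (fun ω (i : Fin (s + N)) => X ((π i : Fin (s + N)) : ℕ) ω) :=
    measurable_pi_lambda _ fun i => hexch.1 _
  have hmap2 : Measurable (fun ω (i : Fin (s + N)) => X ((i : Fin (s + N)) : ℕ) ω) :=
    measurable_pi_lambda _ fun i => hexch.1 _
  have h3 := congrArg (fun ν : Measure (Fin (s + N) → Bool) => ν S) h2
  rw [Measure.map_apply hmap1 hS, Measure.map_apply hmap2 hS] at h3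
  have e1 : (fun ω (i : Fin (s + N)) => X ((π i : Fin (s + N)) : ℕ) ω) ⁻¹' S
      = {ω | ∀ i : Fin N, X (s + (i : ℕ)) ω = w i} := by
    ext ω
    simp only [Set.mem_preimage, hSdef, Set.mem_setOf_eq]
    constructor
    · intro hv i; rw [← hπval i]; exact hv i
    · intro hv i; rw [hπval i]; exact hv i
  have e2 : (fun ω (i : Fin (s + N)) => X ((i : Fin (s + N)) : ℕ) ω) ⁻¹' S
      = {ω | ∀ i : Fin N, X (i : ℕ) ω = w i} := by
    ext ω
    simp only [Set.mem_preimage, hSdef, Set.mem_setOf_eq, Fin.coe_castLE]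
  rw [e1, e2] at h3
  exact h3

lemma zeroCountVec_append {a b : ℕ} (y : Fin a → Bool) (x : Fin b → Bool) :
    zeroCountVec (Fin.append y x) = zeroCountVec y + zeroCountVec x := by
  unfold zeroCountVec
  rw [Finset.card_filter, Finset.card_filter, Finset.card_filter, Fin.sum_univ_add]
  simp [Fin.append_left, Fin.append_right]

lemma zeroCountVec_headTail {n u : ℕ} (hn : 2 ≤ n) (hu1 : 1 ≤ u) (hu2 : u ≤ n)
    (y : Fin u → Bool) (x : Fin (n - 1) → Bool) :
    zeroCountVec (headTail u n y x) =
      (Finset.univ.filter fun i : Fin (n - 1) => x i = false ∧ (i : ℕ) < n - u).card +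
        zeroCountVec y := by
  rw [zeroCountVec, Finset.card_filter,
    ← Finset.sum_filter_add_sum_filter_not Finset.univ (fun i : Fin n => (i : ℕ) < u)]
  have h1 : ∑ i ∈ Finset.univ.filter (fun i : Fin n => (i : ℕ) < u),
      (if headTail u n y x i = false then 1 else 0) = zeroCountVec y := by
    rw [zeroCountVec, Finset.card_filter]
    refine Finset.sum_nbij' (i := fun a => (⟨(a : ℕ) % u, Nat.mod_lt _ (by omega)⟩ : Fin u))
      (j := fun b => (⟨(b : ℕ), lt_of_lt_of_le b.isLt hu2⟩ : Fin n)) ?_ ?_ ?_ ?_ ?_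
    · intro a _; exact Finset.mem_univ _
    · intro b _
      simp only [Finset.mem_filter, Finset.mem_univ, true_and]
      exact b.isLt
    · intro a ha
      simp only [Finset.mem_filter, Finset.mem_univ, true_and] at ha
      apply Fin.ext
      simp [Nat.mod_eq_of_lt ha]
    · intro b _
      apply Fin.ext
      simp [Nat.mod_eq_of_lt b.isLt]
    · intro a ha
      simp only [Finset.mem_filter, Finset.mem_univ, true_and] at ha
      have : headTail u n y x a = y ⟨(a : ℕ) % u, Nat.mod_lt _ (by omega)⟩ := by
        rw [headTail, dif_pos ha]
        congr 1
        apply Fin.ext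
        simp [Nat.mod_eq_of_lt ha]
      rw [this]
  have h2 : ∑ i ∈ Finset.univ.filter (fun i : Fin n => ¬ (i : ℕ) < u),
      (if headTail u n y x i = false then 1 else 0) =
      (Finset.univ.filter fun i : Fin (n - 1) => x i = false ∧ (i : ℕ) < n - u).card := by
    have hk : (Finset.univ.filter fun i : Fin (n - 1) => x i = false ∧ (i : ℕ) < n - u).card =
        ∑ b ∈ Finset.univ.filter (fun i : Fin (n - 1) => (i : ℕ) < n - u),
          (if x b = false then 1 else 0) := by
      rw [Finset.sum_filter, Finset.card_filter]
      refine Finset.sum_congr rfl fun i _ => ?_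
      by_cases h1' : x i = false <;> by_cases h2' : (i : ℕ) < n - u <;> simp [h1', h2']
    rw [hk]
    refine Finset.sum_nbij'
      (i := fun a => (⟨((a : ℕ) - u) % (n - 1), Nat.mod_lt _ (by omega)⟩ : Fin (n - 1)))
      (j := fun b => (⟨(u + (b : ℕ)) % n, Nat.mod_lt _ (by omega)⟩ : Fin n)) ?_ ?_ ?_ ?_ ?_
    · intro a ha
      simp only [Finset.mem_filter, Finset.mem_univ, true_and] at ha ⊢
      have han := a.isLt
      rw [Nat.mod_eq_of_lt (by omega)]
      omega
    · intro b hb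
      simp only [Finset.mem_filter, Finset.mem_univ, true_and] at hb ⊢
      rw [Nat.mod_eq_of_lt (by omega)]
      omega
    · intro a ha
      simp only [Finset.mem_filter, Finset.mem_univ, true_and] at ha
      have han := a.isLt
      apply Fin.ext
      simp only
      rw [Nat.mod_eq_of_lt (show (a : ℕ) - u < n - 1 by omega),
        Nat.mod_eq_of_lt (show u + ((a : ℕ) - u) < n by omega)]
      omega
    · intro b hb
      simp only [Finset.mem_filter, Finset.mem_univ, true_and] at hb
      have hbn := b.isLt
      apply Fin.ext
      simp only
      rw [Nat.mod_eq_of_lt (show u + (b : ℕ) < n by omega), Nat.add_sub_cancel_left,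
        Nat.mod_eq_of_lt b.isLt]
    · intro a ha
      simp only [Finset.mem_filter, Finset.mem_univ, true_and] at ha
      have han := a.isLt
      have hd : ((a : ℕ) - u) % (n - 1) = (a : ℕ) - u := Nat.mod_eq_of_lt (by omega)
      have : headTail u n y x a = x ⟨((a : ℕ) - u) % (n - 1), Nat.mod_lt _ (by omega)⟩ := by
        rw [headTail, dif_neg ha, dif_pos (show (a : ℕ) - u < n - 1 by omega)]
        congr 1
        apply Fin.ext
        simp [hd]
      rw [this]
  rw [h1, h2, Nat.add_comm]

lemma sum_zeroCount {u : ℕ} (G : ℕ → ℝ) :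
    ∑ y : Fin u → Bool, G (zeroCountVec y) =
      ∑ m ∈ Finset.range (u + 1), (u.choose m : ℝ) * G m := by
  let e : (Fin u → Bool) ≃ Finset (Fin u) :=
    { toFun := fun y => Finset.univ.filter fun i => y i = false
      invFun := fun s => fun i => decide (i ∉ s)
      left_inv := by
        intro y; funext i
        cases h : y i <;> simp [h]
      right_inv := by
        intro s; ext i; simp }
  have h1 : ∀ y : Fin u → Bool, G (zeroCountVec y) = (fun s : Finset (Fin u) => G s.card) (e y) :=
    fun y => rfl
  rw [Finset.sum_congr rfl fun y _ => h1 y, Equiv.sum_comp e (fun s => G s.card),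
    ← Finset.powerset_univ, Finset.sum_powerset]
  rw [Finset.card_univ, Fintype.card_fin]
  refine Finset.sum_congr rfl fun m _ => ?_
  have : ∀ t ∈ Finset.powersetCard m (Finset.univ : Finset (Fin u)),
      G t.card = G m := by
    intro t ht
    rw [(Finset.mem_powersetCard.1 ht).2]
  rw [Finset.sum_congr rfl this, Finset.sum_const, Finset.card_powersetCard,
    Finset.card_univ, Fintype.card_fin, nsmul_eq_mul]

end AuxLemmas

/-- formula (14). For a non-deterministic infinite exchangeable
`{0,1}`-valued sequence, `n ≥ 2`, `2 ≤ u ≤ n` and symmetric `φ : {0,1}^n → ℝ`: for every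
`x ∈ {0,1}^{n-1}` with exactly `z` zeros in total and exactly `k` zeros among its first
`n - u` coordinates,
`E[φ(X_1,…,X_n) ∣ (X_{u+1},…,X_{u+n-1}) = x]
  = ∑_{m=0}^{u} C(u,m) φ(0^{(k+m)}) P_{n-1+u}(0^{(z+m)}) / P_{n-1}(0^{(z)})`. -/
theorem condExp_window_formula
    {Ω : Type} [MeasurableSpace Ω] (μ : Measure Ω) [IsProbabilityMeasure μ]
    (X : ℕ → Ω → Bool) (hexch : Exchangeable X μ) (hnd : NonDeterministic X μ)
    (n u : ℕ) (hn : 2 ≤ n) (hu1 : 2 ≤ u) (hu2 : u ≤ n)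
    (φ : (Fin n → Bool) → ℝ) (hφ : SymmFun φ)
    (z k : ℕ) (x : Fin (n - 1) → Bool) (hxz : zeroCountVec x = z)
    (hxk : (Finset.univ.filter fun i : Fin (n - 1) => x i = false ∧ (i : ℕ) < n - u).card = k) :
    (∫ ω in {ω | ∀ i : Fin (n - 1), X (u + (i : ℕ)) ω = x i},
        φ (fun i : Fin n => X (i : ℕ) ω) ∂μ) /
        (μ {ω | ∀ i : Fin (n - 1), X (u + (i : ℕ)) ω = x i}).toReal =
      ∑ m ∈ Finset.range (u + 1),
        (u.choose m : ℝ) * φ (zeroVec n (k + m)) *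
          Pz X μ (n - 1 + u) (z + m) / Pz X μ (n - 1) z := by
  classical
  have hN1 : 0 < n - 1 := by omega
  let C : (Fin u → Bool) → Set Ω := fun y =>
    {ω | ∀ i : Fin (u + (n - 1)), X (i : ℕ) ω = Fin.append y x i}
  have hCmeas : ∀ y, MeasurableSet (C y) := fun y => measurableSet_cyl hexch.1 _
  have hCleft : ∀ y ω, ω ∈ C y → ∀ j : Fin u, X (j : ℕ) ω = y j := by
    intro y ω hω j
    have := hω (Fin.castAdd (n - 1) j)
    rwa [Fin.append_left, Fin.coe_castAdd] at this
  have hCright : ∀ y ω, ω ∈ C y → ∀ i : Fin (n - 1), X (u + (i : ℕ)) ω = x i := by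
    intro y ω hω i
    have := hω (Fin.natAdd u i)
    rwa [Fin.append_right, Fin.coe_natAdd] at this
  have hEunion : {ω | ∀ i : Fin (n - 1), X (u + (i : ℕ)) ω = x i}
      = ⋃ y ∈ (Finset.univ : Finset (Fin u → Bool)), C y := by
    ext ω
    constructor
    · intro hω
      have hmem : ∀ jj : Fin (u + (n - 1)),
          X (jj : ℕ) ω = Fin.append (fun j : Fin u => X (j : ℕ) ω) x jj := by
        intro jj
        by_cases hj : (jj : ℕ) < u
        · have hje : jj = Fin.castAdd (n - 1) ⟨(jj : ℕ), hj⟩ := Fin.ext (by simp)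
          rw [hje, Fin.append_left]
          simp
        · have hj2 : (jj : ℕ) - u < n - 1 := by have := jj.isLt; omega
          have hje : jj = Fin.natAdd u ⟨(jj : ℕ) - u, hj2⟩ := Fin.ext (by simp; omega)
          rw [hje, Fin.append_right]
          have := hω ⟨(jj : ℕ) - u, hj2⟩
          simpa using this
      exact Set.mem_biUnion (Finset.mem_univ _) hmem
    · intro hmem
      rcases Set.mem_iUnion₂.mp hmem with ⟨y, -, hy⟩
      exact fun i => hCright y ω hy i
  have hdisj : (↑(Finset.univ : Finset (Fin u → Bool)) : Set (Fin u → Bool)).Pairwise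
      (Function.onFun Disjoint C) := by
    intro y _ y' _ hne
    rw [Function.onFun, Set.disjoint_left]
    intro ω hy hy'
    apply hne
    funext j
    rw [← hCleft y ω hy j, ← hCleft y' ω hy' j]
  have hconst : ∀ y, Set.EqOn (fun ω => φ (fun i : Fin n => X (i : ℕ) ω))
      (fun _ => φ (headTail u n y x)) (C y) := by
    intro y ω hω
    show φ (fun i : Fin n => X (i : ℕ) ω) = φ (headTail u n y x)
    congr 1
    funext i
    by_cases hi : (i : ℕ) < u
    · simp only [headTail]
      rw [dif_pos hi]
      exact hCleft y ω hω ⟨(i : ℕ), hi⟩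
    · have hi2 : (i : ℕ) - u < n - 1 := by have := i.isLt; omega
      simp only [headTail]
      rw [dif_neg hi, dif_pos hi2]
      have := hCright y ω hω ⟨(i : ℕ) - u, hi2⟩
      rw [show u + ((⟨(i : ℕ) - u, hi2⟩ : Fin (n - 1)) : ℕ) = (i : ℕ) from by simp; omega] at this
      exact this
  have hint : ∀ y ∈ (Finset.univ : Finset (Fin u → Bool)),
      IntegrableOn (fun ω => φ (fun i : Fin n => X (i : ℕ) ω)) (C y) μ := by
    intro y _
    exact (integrableOn_const (measure_ne_top μ _)).congr_fun
      (hconst y).symm (hCmeas y)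
  have hnum : (∫ ω in {ω | ∀ i : Fin (n - 1), X (u + (i : ℕ)) ω = x i},
        φ (fun i : Fin n => X (i : ℕ) ω) ∂μ)
      = ∑ y : Fin u → Bool,
          Pz X μ (n - 1 + u) (z + zeroCountVec y) * φ (zeroVec n (k + zeroCountVec y)) := by
    rw [hEunion, integral_biUnion_finset Finset.univ (fun y _ => hCmeas y) hdisj hint]
    refine Finset.sum_congr rfl fun y _ => ?_
    rw [setIntegral_congr_fun (hCmeas y) (hconst y), setIntegral_const, smul_eq_mul]
    have hμC : (μ (C y)).toReal = Pz X μ (n - 1 + u) (z + zeroCountVec y) := by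
      have h1 : (μ (C y)).toReal = cylProb X μ (Fin.append y x) := rfl
      rw [h1, cylProb_eq_Pz X μ hexch, zeroCountVec_append, hxz,
        Nat.add_comm u (n - 1), Nat.add_comm (zeroCountVec y) z]
    have hφy : φ (headTail u n y x) = φ (zeroVec n (k + zeroCountVec y)) := by
      have hcnt : zeroCountVec (headTail u n y x) = k + zeroCountVec y := by
        rw [zeroCountVec_headTail hn (by omega) hu2, hxk]
      have hle : k + zeroCountVec y ≤ n := hcnt ▸ zeroCountVec_le (headTail u n y x)
      obtain ⟨σ, hσ⟩ := exists_perm_count_eq (w := zeroVec n (k + zeroCountVec y))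
        (w' := headTail u n y x) (by rw [zeroCountVec_zeroVec hle, hcnt])
      have hfun : (fun i => zeroVec n (k + zeroCountVec y) (σ i)) = headTail u n y x :=
        funext hσ
      calc φ (headTail u n y x) = φ ((zeroVec n (k + zeroCountVec y)) ∘ σ) := by
            rw [← hfun]; rfl
        _ = φ (zeroVec n (k + zeroCountVec y)) := hφ σ _
    rw [Measure.real, hμC, hφy]
  have hden : (μ {ω | ∀ i : Fin (n - 1), X (u + (i : ℕ)) ω = x i}).toReal
      = Pz X μ (n - 1) z := by
    rw [measure_shift X μ hexch u hN1 x]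
    have h1 : (μ {ω | ∀ i : Fin (n - 1), X (i : ℕ) ω = x i}).toReal = cylProb X μ x := rfl
    rw [h1, cylProb_eq_Pz X μ hexch, hxz]
  have hgroup : ∑ y : Fin u → Bool,
      Pz X μ (n - 1 + u) (z + zeroCountVec y) * φ (zeroVec n (k + zeroCountVec y))
      = ∑ m ∈ Finset.range (u + 1),
          (u.choose m : ℝ) * (Pz X μ (n - 1 + u) (z + m) * φ (zeroVec n (k + m))) :=
    sum_zeroCount (fun m => Pz X μ (n - 1 + u) (z + m) * φ (zeroVec n (k + m)))
  rw [hnum, hden, hgroup, Finset.sum_div]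
  exact Finset.sum_congr rfl fun m _ => by ring

end HoeffdingUrn
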